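/- arXiv:2011.13508 — 3 statements merged into one kernel-verified Lean document; each statement's English description precedes it below -/
import Mathlib

section
/- Let R : ℂⁿ × ℂⁿ × ℂⁿ × ℂⁿ → ℂ be a curvature-type tensor, i.e. R(X,Ȳ,Z,W̄) is linear in X and Z, conjugate-linear in Y and W, and satisfies the Kähler symmetries R(X,Ȳ,Z,W̄) = R(Z,Ȳ,X,W̄) = R(Z,W̄,X,Ȳ) and conj(R(X,Ȳ,Z,W̄)) = R(Y,X̄,W,Z̄). Define Ric(X,Ȳ) = Σᵢ R(X,Ȳ,eᵢ,ēᵢ) for an orthonormal basis {eᵢ}. Suppose that for every k-dimensional complex subspace Σ ⊆ ℂⁿ containing a unit vector X, one has Σ_{i=1}^k R(X,X̄,Eᵢ,Ēᵢ) ≤ -(k+1)σ for every orthonormal basis {E₁,...,E_k} of Σ with E₁ = X (the condition Ric_k ≤ -(k+1)σ), where 1 < k < n and σ ≥ 0. Then for every X ∈ ℂⁿ: (k-1)|X|² Ric(X,X̄) + (n-k) R(X,X̄,X,X̄) ≤ -(n-1)(k+1)σ |X|⁴. -/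
open Finset

/-- Lemma 2.1 of Chu–Lee–Tam: if a Kähler curvature-type tensor `R` on `ℂⁿ` satisfies
`Ric_k ≤ -(k+1)σ` (for every `k`-dimensional subspace containing a unit vector `X`,
i.e. for every orthonormal family `E₁ = X, E₂, …, E_k`), where `1 < k < n` and `σ ≥ 0`,
then `(k-1)|X|² Ric(X,X̄) + (n-k) R(X,X̄,X,X̄) ≤ -(n-1)(k+1)σ |X|⁴` for every `X`. -/
theorem riccik_neg_implies_quartic_ineq (n k : ℕ) (hk : 1 < k) (hkn : k < n)
    (σ : ℝ) (hσ : 0 ≤ σ)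
    (R : EuclideanSpace ℂ (Fin n) → EuclideanSpace ℂ (Fin n) →
          EuclideanSpace ℂ (Fin n) → EuclideanSpace ℂ (Fin n) → ℂ)
    (hadd1 : ∀ X X' Y Z W, R (X + X') Y Z W = R X Y Z W + R X' Y Z W)
    (hsmul1 : ∀ (c : ℂ) X Y Z W, R (c • X) Y Z W = c * R X Y Z W)
    (hadd2 : ∀ X Y Y' Z W, R X (Y + Y') Z W = R X Y Z W + R X Y' Z W)
    (hsmul2 : ∀ (c : ℂ) X Y Z W, R X (c • Y) Z W = (starRingEnd ℂ) c * R X Y Z W)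
    (hsym1 : ∀ X Y Z W, R X Y Z W = R Z Y X W)
    (hsym2 : ∀ X Y Z W, R X Y Z W = R Z W X Y)
    (hconj : ∀ X Y Z W, (starRingEnd ℂ) (R X Y Z W) = R Y X W Z)
    (Ric : EuclideanSpace ℂ (Fin n) → EuclideanSpace ℂ (Fin n) → ℂ)
    (hRic : ∀ X Y, Ric X Y =
      ∑ i : Fin n, R X Y (EuclideanSpace.basisFun (Fin n) ℂ i) (EuclideanSpace.basisFun (Fin n) ℂ i))
    (hRick : ∀ (X : EuclideanSpace ℂ (Fin n)), ‖X‖ = 1 →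
      ∀ v : Fin k → EuclideanSpace ℂ (Fin n), Orthonormal ℂ v → v ⟨0, by omega⟩ = X →
        (∑ i : Fin k, R X X (v i) (v i)).re ≤ -((k : ℝ) + 1) * σ) :
    ∀ X : EuclideanSpace ℂ (Fin n),
      ((k : ℝ) - 1) * ‖X‖ ^ 2 * (Ric X X).re + ((n : ℝ) - k) * (R X X X X).re
        ≤ -((n : ℝ) - 1) * ((k : ℝ) + 1) * σ * ‖X‖ ^ 4 := by
  classical
  set e : Fin n → EuclideanSpace ℂ (Fin n) := fun i => EuclideanSpace.basisFun (Fin n) ℂ i with he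
  -- linearity in the third slot
  have h3smul : ∀ (c : ℂ) X Y Z W, R X Y (c • Z) W = c * R X Y Z W := by
    intro c X Y Z W
    rw [hsym1 X Y (c • Z) W, hsmul1, ← hsym1 X Y Z W]
  have h3add : ∀ X Y Z Z' W, R X Y (Z + Z') W = R X Y Z W + R X Y Z' W := by
    intro X Y Z Z' W
    rw [hsym1 X Y (Z + Z') W, hadd1, ← hsym1 X Y Z W, ← hsym1 X Y Z' W]
  have hzero3 : ∀ X Y W, R X Y 0 W = 0 := by
    intro X Y W
    have := h3smul 0 X Y 0 W
    simpa using this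
  -- conjugate-linearity in the fourth slot
  have h4smul : ∀ (c : ℂ) X Y Z W, R X Y Z (c • W) = (starRingEnd ℂ) c * R X Y Z W := by
    intro c X Y Z W
    have h : (starRingEnd ℂ) (R X Y Z (c • W)) = c * (starRingEnd ℂ) (R X Y Z W) := by
      rw [hconj, hconj, h3smul]
    have h2 := congrArg (starRingEnd ℂ) h
    simpa [map_mul] using h2
  have h4add : ∀ X Y Z W W', R X Y Z (W + W') = R X Y Z W + R X Y Z W' := by
    intro X Y Z W W'
    have h : (starRingEnd ℂ) (R X Y Z (W + W')) =
        (starRingEnd ℂ) (R X Y Z W) + (starRingEnd ℂ) (R X Y Z W') := by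
      rw [hconj, hconj, hconj, h3add]
    have h2 := congrArg (starRingEnd ℂ) h
    simpa [map_add] using h2
  have hzero4 : ∀ X Y Z, R X Y Z 0 = 0 := by
    intro X Y Z
    have := h4smul 0 X Y Z 0
    simpa using this
  -- sums in slots 3 and 4
  have hsum3 : ∀ X Y W (v : Fin n → EuclideanSpace ℂ (Fin n)),
      R X Y (∑ a : Fin n, v a) W = ∑ a : Fin n, R X Y (v a) W := by
    intro X Y W v
    induction (Finset.univ : Finset (Fin n)) using Finset.induction with
    | empty => simpa using hzero3 X Y W
    | @insert _ _ h ih => rw [Finset.sum_insert h, h3add, ih, Finset.sum_insert h]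
  have hsum4 : ∀ X Y Z (v : Fin n → EuclideanSpace ℂ (Fin n)),
      R X Y Z (∑ a : Fin n, v a) = ∑ a : Fin n, R X Y Z (v a) := by
    intro X Y Z v
    induction (Finset.univ : Finset (Fin n)) using Finset.induction with
    | empty => simpa using hzero4 X Y Z
    | @insert _ _ h ih => rw [Finset.sum_insert h, h4add, ih, Finset.sum_insert h]
  -- expansion of a vector in the standard basis
  have hexpand : ∀ v : EuclideanSpace ℂ (Fin n), v = ∑ a : Fin n, (v a) • e a := by
    intro v
    have := (EuclideanSpace.basisFun (Fin n) ℂ).sum_repr v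
    simp only [EuclideanSpace.basisFun_repr] at this
    exact this.symm
  -- trace over any orthonormal basis equals Ric
  have htrace : ∀ (b : OrthonormalBasis (Fin n) ℂ (EuclideanSpace ℂ (Fin n))) X Y,
      ∑ i : Fin n, R X Y (b i) (b i) = Ric X Y := by
    intro b X Y
    have key : ∀ i : Fin n, R X Y (b i) (b i) =
        ∑ a : Fin n, ∑ c : Fin n, (b i a * (starRingEnd ℂ) (b i c)) * R X Y (e a) (e c) := by
      intro i
      conv_lhs => rw [hexpand (b i)]
      rw [hsum3]
      refine Finset.sum_congr rfl fun a _ => ?_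
      rw [h3smul, hsum4, Finset.mul_sum]
      refine Finset.sum_congr rfl fun c _ => ?_
      rw [h4smul]; ring
    calc ∑ i : Fin n, R X Y (b i) (b i)
        = ∑ i : Fin n, ∑ a : Fin n, ∑ c : Fin n,
            (b i a * (starRingEnd ℂ) (b i c)) * R X Y (e a) (e c) :=
          Finset.sum_congr rfl fun i _ => key i
      _ = ∑ a : Fin n, ∑ c : Fin n,
            (∑ i : Fin n, b i a * (starRingEnd ℂ) (b i c)) * R X Y (e a) (e c) := by
          rw [Finset.sum_comm]
          refine Finset.sum_congr rfl fun a _ => ?_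
          rw [Finset.sum_comm]
          refine Finset.sum_congr rfl fun c _ => ?_
          rw [Finset.sum_mul]
      _ = ∑ a : Fin n, ∑ c : Fin n,
            (if a = c then (1:ℂ) else 0) * R X Y (e a) (e c) := by
          refine Finset.sum_congr rfl fun a _ => Finset.sum_congr rfl fun c _ => ?_
          congr 1
          have h1 : ∀ i, b i a = (inner ℂ (e a) (b i) : ℂ) := by
            intro i
            rw [he]
            simp [EuclideanSpace.basisFun_apply, EuclideanSpace.inner_single_left]
          have h2 : ∀ i, (starRingEnd ℂ) (b i c) = (inner ℂ (b i) (e c) : ℂ) := by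
            intro i
            rw [he]
            simp only [EuclideanSpace.basisFun_apply]
            rw [← inner_conj_symm]
            congr 1
            simp [EuclideanSpace.inner_single_left]
          calc ∑ i : Fin n, b i a * (starRingEnd ℂ) (b i c)
              = ∑ i : Fin n, (inner ℂ (e a) (b i) : ℂ) * inner ℂ (b i) (e c) := by
                refine Finset.sum_congr rfl fun i _ => ?_
                rw [h1, h2]
            _ = inner ℂ (e a) (e c) := b.sum_inner_mul_inner (e a) (e c)
            _ = if a = c then (1:ℂ) else 0 := by
                rw [he]
                simp only [EuclideanSpace.basisFun_apply, EuclideanSpace.inner_single_left,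
                  EuclideanSpace.single_apply]
                simp [eq_comm]
      _ = ∑ a : Fin n, R X Y (e a) (e a) := by
          refine Finset.sum_congr rfl fun a _ => ?_
          simp
      _ = Ric X Y := (hRic X Y).symm
  -- main inequality for unit vectors
  have main : ∀ X : EuclideanSpace ℂ (Fin n), ‖X‖ = 1 →
      ((k : ℝ) - 1) * (Ric X X).re + ((n : ℝ) - k) * (R X X X X).re
        ≤ -((n : ℝ) - 1) * ((k : ℝ) + 1) * σ := by
    intro X hX
    obtain ⟨k', rfl⟩ : ∃ k', k = k' + 1 := ⟨k - 1, by omega⟩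
    obtain ⟨m, rfl⟩ : ∃ m, n = m + 1 := ⟨n - 1, by omega⟩
    have hk' : 1 ≤ k' := by omega
    have hk'm : k' < m := by omega
    have hm0 : 0 < m := by omega
    set i0 : Fin (m + 1) := ⟨0, by omega⟩ with hi0
    -- extend X to an orthonormal basis
    have horth : Orthonormal ℂ
        (Set.restrict ({i0} : Set (Fin (m + 1))) (fun _ => X)) := by
      rw [orthonormal_iff_ite]
      intro i j
      have hij : i = j := Subtype.ext
        ((Set.mem_singleton_iff.mp i.2).trans (Set.mem_singleton_iff.mp j.2).symm)
      subst hij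
      simp only [if_pos rfl, Set.restrict_apply]
      rw [inner_self_eq_norm_sq_to_K]
      simp [hX]
      exact Or.inl hX
    obtain ⟨b, hb⟩ := Orthonormal.exists_orthonormalBasis_extension_of_card_eq
      (𝕜 := ℂ) (by simp) horth
    have hb0 : b i0 = X := hb i0 rfl
    -- the index maps
    have hmod : ∀ x : ℕ, x % m + 1 < m + 1 := fun x => by
      have := Nat.mod_lt x hm0; omega
    set f : Fin m → Fin (k' + 1) → Fin (m + 1) := fun j =>
      Fin.cases (motive := fun _ => Fin (m + 1)) i0
        (fun i => ⟨((j : ℕ) + (i : ℕ)) % m + 1, hmod _⟩) with hf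
    have hf0 : ∀ j, f j (0 : Fin (k' + 1)) = i0 := by
      intro j; simp only [hf, Fin.cases_zero]
    have hfs : ∀ j (i : Fin k'), f j i.succ = ⟨((j : ℕ) + (i : ℕ)) % m + 1, hmod _⟩ := by
      intro j i; simp only [hf, Fin.cases_succ]
    have hcancel : ∀ (j a c : ℕ), a < m → c < m →
        (j + a) % m + 1 = (j + c) % m + 1 → a = c := by
      intro j a c ha hc h
      have h1 : (j + a) % m = (j + c) % m := by omega
      have h2 : a ≡ c [MOD m] := Nat.ModEq.add_left_cancel' j h1
      have h3 : a % m = c % m := h2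
      rw [Nat.mod_eq_of_lt ha, Nat.mod_eq_of_lt hc] at h3
      exact h3
    have hfinj : ∀ j, Function.Injective (f j) := by
      intro j a c
      induction a using Fin.cases with
      | zero =>
        induction c using Fin.cases with
        | zero => intro _; rfl
        | succ i =>
          intro hac
          rw [hf0, hfs] at hac
          have := congrArg Fin.val hac
          simp only [hi0] at this
          omega
      | succ i =>
        induction c using Fin.cases with
        | zero =>
          intro hac
          rw [hf0, hfs] at hac
          have := congrArg Fin.val hac
          simp only [hi0] at this
          omega
        | succ i' =>
          intro hac
          rw [hfs, hfs] at hac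
          have hv := congrArg Fin.val hac
          simp only at hv
          have hieq : (i : ℕ) = (i' : ℕ) :=
            hcancel (j : ℕ) (i : ℕ) (i' : ℕ) (by omega) (by omega) hv
          exact congrArg Fin.succ (Fin.ext hieq)
    -- abbreviations
    set ψ : Fin (m + 1) → ℝ := fun a => (R X X (b a) (b a)).re with hψ
    set φ : Fin m → ℝ := fun t => ψ ⟨(t : ℕ) + 1, by omega⟩ with hφ
    -- per-window inequality
    have hwin : ∀ j : Fin m,
        ψ i0 + ∑ i : Fin k', φ ⟨((j : ℕ) + (i : ℕ)) % m, Nat.mod_lt _ hm0⟩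
          ≤ -(((k' + 1 : ℕ) : ℝ) + 1) * σ := by
      intro j
      have hv0 : (b ∘ f j) ⟨0, by omega⟩ = X := by
        have h00 : (⟨0, by omega⟩ : Fin (k' + 1)) = 0 := by
          apply Fin.ext; simp
        rw [h00]
        simp only [Function.comp_apply, hf0, hb0]
      have key := hRick X hX (b ∘ f j) (b.orthonormal.comp (f j) (hfinj j)) hv0
      rw [Complex.re_sum, Fin.sum_univ_succ] at key
      have h0 : (R X X ((b ∘ f j) (0 : Fin (k' + 1))) ((b ∘ f j) (0 : Fin (k' + 1)))).re
          = ψ i0 := by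
        simp only [Function.comp_apply, hf0]; rfl
      have hsucc : ∀ i : Fin k',
          (R X X ((b ∘ f j) i.succ) ((b ∘ f j) i.succ)).re
            = φ ⟨((j : ℕ) + (i : ℕ)) % m, Nat.mod_lt _ hm0⟩ := by
        intro i
        simp only [Function.comp_apply, hfs]; rfl
      rw [h0] at key
      calc ψ i0 + ∑ i : Fin k', φ ⟨((j : ℕ) + (i : ℕ)) % m, Nat.mod_lt _ hm0⟩
          = ψ i0 + ∑ i : Fin k',
              (R X X ((b ∘ f j) i.succ) ((b ∘ f j) i.succ)).re := by
            congr 1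
        _ ≤ -(((k' + 1 : ℕ) : ℝ) + 1) * σ := key
    -- shifting sums
    have hshift : ∀ i : Fin k',
        (∑ j : Fin m, φ ⟨((j : ℕ) + (i : ℕ)) % m, Nat.mod_lt _ hm0⟩) = ∑ t : Fin m, φ t := by
      intro i
      have hbij : Function.Bijective
          (fun j : Fin m => (⟨((j : ℕ) + (i : ℕ)) % m, Nat.mod_lt _ hm0⟩ : Fin m)) := by
        rw [← Finite.injective_iff_bijective]
        intro a c hac
        have hv := congrArg Fin.val hac
        simp only at hv
        have h2 : (a : ℕ) ≡ (c : ℕ) [MOD m] := Nat.ModEq.add_right_cancel' (i : ℕ) hv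
        have h3 : (a : ℕ) % m = (c : ℕ) % m := h2
        rw [Nat.mod_eq_of_lt a.isLt, Nat.mod_eq_of_lt c.isLt] at h3
        exact Fin.ext h3
      exact hbij.sum_comp φ
    -- summing the windows
    have hsumineq : (m : ℝ) * ψ i0 + (k' : ℝ) * ∑ t : Fin m, φ t
        ≤ (m : ℝ) * (-(((k' + 1 : ℕ) : ℝ) + 1) * σ) := by
      have h := Finset.sum_le_sum (fun j (_ : j ∈ (Finset.univ : Finset (Fin m))) => hwin j)
      rw [Finset.sum_add_distrib, Finset.sum_const, Finset.sum_const] at h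
      simp only [Finset.card_univ, Fintype.card_fin, nsmul_eq_mul] at h
      rw [Finset.sum_comm] at h
      calc (m : ℝ) * ψ i0 + (k' : ℝ) * ∑ t : Fin m, φ t
          = (m : ℝ) * ψ i0 + ∑ _i : Fin k', ∑ t : Fin m, φ t := by
            rw [Finset.sum_const, Finset.card_univ, Fintype.card_fin, nsmul_eq_mul]
        _ = (m : ℝ) * ψ i0 + ∑ i : Fin k',
              ∑ j : Fin m, φ ⟨((j : ℕ) + (i : ℕ)) % m, Nat.mod_lt _ hm0⟩ := by
            congr 1
            exact (Finset.sum_congr rfl fun i _ => (hshift i)).symm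
        _ ≤ (m : ℝ) * (-(((k' + 1 : ℕ) : ℝ) + 1) * σ) := h
    -- relate to Ric and conclude
    have hRicsum : (Ric X X).re = ψ i0 + ∑ t : Fin m, φ t := by
      rw [← htrace b X X, Complex.re_sum, Fin.sum_univ_succ]
      congr 1
    have hR0 : (R X X X X).re = ψ i0 := by rw [hψ]; simp only [hb0]
    rw [hRicsum, hR0]
    push_cast
    push_cast at hsumineq
    nlinarith [hsumineq]
  -- general case by scaling
  intro X
  by_cases hX0 : X = 0
  · subst hX0
    have hz : ∀ Y Z W, R 0 Y Z W = 0 := by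
      intro Y Z W
      have := hsmul1 0 0 Y Z W
      simpa using this
    have hr0 : R 0 0 0 0 = 0 := hz 0 0 0
    have hric0 : Ric 0 0 = 0 := by
      rw [hRic]
      refine Finset.sum_eq_zero fun i _ => hz _ _ _
    simp [hr0, hric0]
  · have hc : 0 < ‖X‖ := norm_pos_iff.mpr hX0
    set c : ℝ := ‖X‖ with hcdef
    set u : EuclideanSpace ℂ (Fin n) := ((c : ℂ))⁻¹ • X with hu
    have hcne : (c : ℂ) ≠ 0 := by
      simp only [ne_eq, Complex.ofReal_eq_zero]
      exact ne_of_gt hc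
    have hun : ‖u‖ = 1 := by
      rw [hu, norm_smul]
      simp only [norm_inv, Complex.norm_real, Real.norm_eq_abs, abs_of_pos hc]
      rw [← hcdef]
      field_simp
    have hXu : X = (c : ℂ) • u := by
      rw [hu, smul_smul, mul_inv_cancel₀ hcne, one_smul]
    have hRscale : R X X X X = ((c : ℂ))^4 * R u u u u := by
      conv_lhs => rw [hXu]
      rw [hsmul1, hsmul2, h3smul, h4smul, Complex.conj_ofReal]
      ring
    have hRicscale : Ric X X = ((c : ℂ))^2 * Ric u u := by
      rw [hRic X X, hRic u u, Finset.mul_sum]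
      refine Finset.sum_congr rfl fun i _ => ?_
      conv_lhs => rw [hXu]
      rw [hsmul1, hsmul2, Complex.conj_ofReal]
      ring
    have hre1 : (Ric X X).re = c^2 * (Ric u u).re := by
      rw [hRicscale, ← Complex.ofReal_pow, Complex.re_ofReal_mul]
    have hre2 : (R X X X X).re = c^4 * (R u u u u).re := by
      rw [hRscale, ← Complex.ofReal_pow, Complex.re_ofReal_mul]
    have hmu := main u hun
    have h4 : (0:ℝ) ≤ c^4 := by positivity
    rw [hre1, hre2]
    have key := mul_le_mul_of_nonneg_left hmu h4
    nlinarith [key]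
end

section
/- Let E be a complex vector space of dimension r with Hermitian inner product, T a complex vector space of dimension n. Let Θ : T × T̄ × E × Ē → ℂ be a tensor which is Hermitian in the sense that conj(Θ(α,β̄,i,k̄)) = Θ(β,ᾱ,k,ī) (indices denote orthonormal basis vectors). Suppose Θ is Griffiths nonnegative and Griffiths positive for generic directions: for all v ∈ T and w ∈ E, Θ(v,v̄,w,w̄) ≥ 0, with strict inequality whenever v ≠ 0 and w ≠ 0. Then for every nonzero τ = (τ^{iα}) ∈ T ⊗ E: Σ_{α,β,i,k} Θ_{αβ̄kk̄} τ^{iα} conj(τ^{iβ}) + Σ_{α,β,i,k} Θ_{αβ̄ik̄} τ^{iα} conj(τ^{kβ}) > 0 (Demailly–Skoda: Griffiths positivity of E implies Nakano positivity of E ⊗ det E). -/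
open Finset

/-- The character `t ↦ I^t` on `ZMod 4`, used for a finite averaging argument. -/
noncomputable def ww : ZMod 4 → ℂ := fun t => Complex.I ^ t.val

lemma ww_add (s t : ZMod 4) : ww (s + t) = ww s * ww t := by
  unfold ww
  rw [← pow_add, pow_eq_pow_mod (s.val + t.val) Complex.I_pow_four, ZMod.val_add]

lemma ww_zero : ww 0 = 1 := by simp [ww]

lemma ww_ne_zero (t : ZMod 4) : ww t ≠ 0 := by
  simp [ww, Complex.I_ne_zero]

lemma ww_conj (t : ZMod 4) : (starRingEnd ℂ) (ww t) = ww (-t) := by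
  have h1 : ww t * ww (-t) = 1 := by rw [← ww_add]; simp [ww_zero]
  have h2 : (starRingEnd ℂ) (ww t) * ww t = 1 := by
    have : ‖ww t‖ = 1 := by simp [ww]
    rw [mul_comm, Complex.mul_conj, Complex.normSq_eq_norm_sq, this]
    norm_num
  calc (starRingEnd ℂ) (ww t) = (starRingEnd ℂ) (ww t) * (ww t * ww (-t)) := by rw [h1, mul_one]
    _ = ((starRingEnd ℂ) (ww t) * ww t) * ww (-t) := by ring
    _ = ww (-t) := by rw [h2, one_mul]

lemma ww_sum_mul (c : ZMod 4) : ∑ x : ZMod 4, ww (c * x) = if c = 0 then 4 else 0 := by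
  have huniv : (Finset.univ : Finset (ZMod 4)) = {0, 1, 2, 3} := by decide
  have hc : ∀ c : ZMod 4, c = 0 ∨ c = 1 ∨ c = 2 ∨ c = 3 := by decide
  rcases hc c with rfl | rfl | rfl | rfl <;>
  · rw [huniv]
    rw [Finset.sum_insert (by decide), Finset.sum_insert (by decide),
      Finset.sum_insert (by decide), Finset.sum_singleton]
    norm_num [ww, show (ZMod.val (0 : ZMod 4)) = 0 from rfl,
      show (ZMod.val (1 : ZMod 4)) = 1 from rfl,
      show (ZMod.val (2 : ZMod 4)) = 2 from rfl,
      show (ZMod.val (3 : ZMod 4)) = 3 from rfl,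
      show (ZMod.val (4 : ZMod 4)) = 0 from rfl,
      show (ZMod.val (6 : ZMod 4)) = 2 from rfl,
      show (ZMod.val (9 : ZMod 4)) = 1 from rfl,
      show ((1 : ZMod 4) = 0) = False from by decide,
      show ((2 : ZMod 4) = 0) = False from by decide,
      show ((3 : ZMod 4) = 0) = False from by decide,
      pow_succ, Complex.I_sq]

lemma ww_prod_sum {γ : Type*} [DecidableEq γ] (s : Finset γ) (f : γ → ZMod 4) :
    ww (∑ m ∈ s, f m) = ∏ m ∈ s, ww (f m) := by
  induction s using Finset.induction with
  | empty => simp [ww_zero]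
  | insert _ _ h ih => rw [Finset.sum_insert h, Finset.prod_insert h, ww_add, ih]

lemma pair_iff {α : Type*} [DecidableEq α] (i j k l : α) :
    (∀ m : α, ((if m = i then (1 : ZMod 4) else 0) + (if m = l then 1 else 0))
      = (if m = j then 1 else 0) + (if m = k then 1 else 0))
    ↔ ((i = j ∧ l = k) ∨ (i = k ∧ l = j)) := by
  constructor
  · intro H
    by_cases hij : i = j
    · subst hij
      left
      refine ⟨rfl, ?_⟩
      by_cases hlk : l = k
      · exact hlk
      · exfalso
        have Hl := H l
        simp only [if_pos rfl, if_neg hlk] at Hl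
        by_cases hli : l = i <;> simp [hli] at Hl <;> exact absurd Hl (by decide)
    · by_cases hik : i = k
      · subst hik
        right
        refine ⟨rfl, ?_⟩
        by_cases hlj : l = j
        · exact hlj
        · exfalso
          have Hl := H l
          simp only [if_pos rfl, if_neg hlj] at Hl
          by_cases hli : l = i <;> simp [hli] at Hl <;> exact absurd Hl (by decide)
      · exfalso
        have Hi := H i
        simp only [if_pos rfl, if_neg hij, if_neg hik] at Hi
        by_cases hil : i = l <;> simp [hil] at Hi <;> exact absurd Hi (by decide)
  · rintro (⟨rfl, rfl⟩ | ⟨rfl, rfl⟩) m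
    · rfl
    · exact add_comm _ _

lemma M_eval {r : ℕ} (i j k l : Fin r) :
    ∑ ε : Fin r → ZMod 4, ww (ε i) * ww (ε l) * ww (-ε j) * ww (-ε k)
    = (if i = j ∧ l = k then ((4:ℂ))^r else 0) + (if i = k ∧ l = j then (4:ℂ)^r else 0)
      - (if (i = j ∧ l = k) ∧ (i = k ∧ l = j) then (4:ℂ)^r else 0) := by
  classical
  set c : Fin r → ZMod 4 := fun m =>
    ((if m = i then 1 else 0) + (if m = l then 1 else 0))
      - ((if m = j then 1 else 0) + (if m = k then 1 else 0)) with hc_def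
  have step1 : ∀ ε : Fin r → ZMod 4,
      ww (ε i) * ww (ε l) * ww (-ε j) * ww (-ε k) = ∏ m, ww (c m * ε m) := by
    intro ε
    have hsum : ∑ m, c m * ε m = ε i + (ε l + (-ε j + -ε k)) := by
      simp only [hc_def, sub_mul, add_mul, ite_mul, one_mul, zero_mul,
        Finset.sum_sub_distrib, Finset.sum_add_distrib, Finset.sum_ite_eq',
        Finset.mem_univ, if_true]
      ring
    rw [← ww_prod_sum, hsum, ww_add, ww_add, ww_add]
    ring
  simp only [step1]
  have step2 : ∑ ε : Fin r → ZMod 4, ∏ m, ww (c m * ε m)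
      = ∏ m, ∑ x : ZMod 4, ww (c m * x) := by
    rw [Finset.prod_univ_sum, Fintype.piFinset_univ]
  rw [step2]
  simp only [ww_sum_mul]
  have hpair := pair_iff i j k l
  by_cases hall : ∀ m, c m = 0
  · have hdisj : (i = j ∧ l = k) ∨ (i = k ∧ l = j) := by
      rw [← hpair]
      intro m
      have := hall m
      rw [hc_def] at this
      exact sub_eq_zero.mp this
    have hprod : ∏ m : Fin r, (if c m = 0 then (4:ℂ) else 0) = 4 ^ r := by
      simp [hall]
    rw [hprod]
    by_cases h1 : i = j ∧ l = k <;> by_cases h2 : i = k ∧ l = j <;>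
      simp [h1, h2] <;> tauto
  · push_neg at hall
    obtain ⟨m₀, hm₀⟩ := hall
    have hprod : ∏ m : Fin r, (if c m = 0 then (4:ℂ) else 0) = 0 :=
      Finset.prod_eq_zero (Finset.mem_univ m₀) (by simp [hm₀])
    rw [hprod]
    have hnd : ¬((i = j ∧ l = k) ∨ (i = k ∧ l = j)) := by
      intro hd
      apply hm₀
      rw [hc_def]
      have := (hpair.mpr hd) m₀
      simp only [sub_eq_zero]
      exact this
    rw [if_neg (fun h => hnd (Or.inl h)), if_neg (fun h => hnd (Or.inr h)),
      if_neg (fun h => hnd (Or.inl h.1))]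
    ring

lemma key_identity {n r : ℕ} (Θ : Fin n → Fin n → Fin r → Fin r → ℂ)
    (τ : Fin r → Fin n → ℂ) :
    ∑ ε : Fin r → ZMod 4, (∑ α, ∑ β, ∑ i, ∑ k, Θ α β i k * (∑ j, τ j α * ww (-ε j))
        * (starRingEnd ℂ) (∑ l, τ l β * ww (-ε l)) * ww (ε i) * (starRingEnd ℂ) (ww (ε k)))
    = (4:ℂ)^r * (∑ α, ∑ β, ∑ i, ∑ k, Θ α β k k * τ i α * (starRingEnd ℂ) (τ i β))
      + (4:ℂ)^r * (∑ α, ∑ β, ∑ i, ∑ k, Θ α β i k * τ i α * (starRingEnd ℂ) (τ k β))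
      - (4:ℂ)^r * (∑ α, ∑ β, ∑ i, Θ α β i i * τ i α * (starRingEnd ℂ) (τ i β)) := by
  have stepa : ∀ ε : Fin r → ZMod 4,
      (∑ α, ∑ β, ∑ i, ∑ k, Θ α β i k * (∑ j, τ j α * ww (-ε j))
        * (starRingEnd ℂ) (∑ l, τ l β * ww (-ε l)) * ww (ε i) * (starRingEnd ℂ) (ww (ε k)))
      = ∑ α, ∑ β, ∑ i, ∑ k, ∑ j, ∑ l,
          (Θ α β i k * τ l α * (starRingEnd ℂ) (τ j β))
            * (ww (ε i) * ww (ε j) * ww (-ε l) * ww (-ε k)) := by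
    intro ε
    refine Finset.sum_congr rfl fun α _ => Finset.sum_congr rfl fun β _ =>
      Finset.sum_congr rfl fun i _ => Finset.sum_congr rfl fun k _ => ?_
    rw [map_sum, ww_conj (ε k)]
    simp only [map_mul, ww_conj, neg_neg]
    simp only [Finset.mul_sum, Finset.sum_mul]
    exact Finset.sum_congr rfl fun j _ => Finset.sum_congr rfl fun l _ => by ring
  simp only [stepa]
  have swap : ∑ ε : Fin r → ZMod 4, ∑ α, ∑ β, ∑ i, ∑ k, ∑ j, ∑ l,
        (Θ α β i k * τ l α * (starRingEnd ℂ) (τ j β))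
          * (ww (ε i) * ww (ε j) * ww (-ε l) * ww (-ε k))
      = ∑ α, ∑ β, ∑ i, ∑ k, ∑ j, ∑ l,
        (Θ α β i k * τ l α * (starRingEnd ℂ) (τ j β))
          * (∑ ε : Fin r → ZMod 4, ww (ε i) * ww (ε j) * ww (-ε l) * ww (-ε k)) := by
    rw [Finset.sum_comm]
    refine Finset.sum_congr rfl fun α _ => ?_
    rw [Finset.sum_comm]
    refine Finset.sum_congr rfl fun β _ => ?_
    rw [Finset.sum_comm]
    refine Finset.sum_congr rfl fun i _ => ?_
    rw [Finset.sum_comm]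
    refine Finset.sum_congr rfl fun k _ => ?_
    rw [Finset.sum_comm]
    refine Finset.sum_congr rfl fun j _ => ?_
    rw [Finset.sum_comm]
    refine Finset.sum_congr rfl fun l _ => ?_
    rw [Finset.mul_sum]
  rw [swap]
  simp only [M_eval]
  simp only [mul_add, mul_sub, mul_ite, mul_zero]
  simp only [Finset.sum_add_distrib, Finset.sum_sub_distrib]
  simp only [ite_and, Finset.sum_ite_irrel, Finset.sum_ite_eq, Finset.sum_ite_eq',
    Finset.mem_univ, if_true, Finset.sum_const_zero]
  conv_lhs => simp only [← Finset.sum_mul]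
  have e2 : (∑ α : Fin n, ∑ β : Fin n, ∑ x2 : Fin r, ∑ x3 : Fin r,
        Θ α β x2 x2 * τ x3 α * (starRingEnd ℂ) (τ x3 β))
      = ∑ α : Fin n, ∑ β : Fin n, ∑ i : Fin r, ∑ k : Fin r,
        Θ α β k k * τ i α * (starRingEnd ℂ) (τ i β) :=
    Finset.sum_congr rfl fun α _ => Finset.sum_congr rfl fun β _ => Finset.sum_comm
  rw [e2]
  ring

/-- Demailly–Skoda: Griffiths positivity of `(E, h)` implies Nakano positivity of
`E ⊗ det E`. In components: if the Hermitian curvature tensor `Θ` is Griffiths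
nonnegative, and positive on nonzero pairs, then for every nonzero `τ = (τ^{iα})`,
`Σ Θ_{αβ̄kk̄} τ^{iα} conj(τ^{iβ}) + Σ Θ_{αβ̄ik̄} τ^{iα} conj(τ^{kβ}) > 0`. -/
theorem griffiths_pos_implies_nakano_pos_tensor_det (n r : ℕ)
    (Θ : Fin n → Fin n → Fin r → Fin r → ℂ)
    (hherm : ∀ α β i k, (starRingEnd ℂ) (Θ α β i k) = Θ β α k i)
    (hgriff_nonneg : ∀ (v : Fin n → ℂ) (w : Fin r → ℂ),
      0 ≤ (∑ α : Fin n, ∑ β : Fin n, ∑ i : Fin r, ∑ k : Fin r,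
        Θ α β i k * v α * (starRingEnd ℂ) (v β) * w i * (starRingEnd ℂ) (w k)).re)
    (hgriff_pos : ∀ (v : Fin n → ℂ) (w : Fin r → ℂ), v ≠ 0 → w ≠ 0 →
      0 < (∑ α : Fin n, ∑ β : Fin n, ∑ i : Fin r, ∑ k : Fin r,
        Θ α β i k * v α * (starRingEnd ℂ) (v β) * w i * (starRingEnd ℂ) (w k)).re)
    (τ : Fin r → Fin n → ℂ) (hτ : τ ≠ 0) :
    0 < ((∑ α : Fin n, ∑ β : Fin n, ∑ i : Fin r, ∑ k : Fin r,
            Θ α β k k * τ i α * (starRingEnd ℂ) (τ i β))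
          + ∑ α : Fin n, ∑ β : Fin n, ∑ i : Fin r, ∑ k : Fin r,
            Θ α β i k * τ i α * (starRingEnd ℂ) (τ k β)).re := by
  classical
  -- a nonzero entry of τ
  obtain ⟨i₀, hi₀⟩ := Function.ne_iff.mp hτ
  obtain ⟨α₀, hτ0⟩ := Function.ne_iff.mp hi₀
  -- notation for the two sums in the goal and the diagonal correction term
  set A : ℂ := ∑ α : Fin n, ∑ β : Fin n, ∑ i : Fin r, ∑ k : Fin r,
      Θ α β k k * τ i α * (starRingEnd ℂ) (τ i β) with hA
  set B : ℂ := ∑ α : Fin n, ∑ β : Fin n, ∑ i : Fin r, ∑ k : Fin r,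
      Θ α β i k * τ i α * (starRingEnd ℂ) (τ k β) with hB
  set C : ℂ := ∑ α : Fin n, ∑ β : Fin n, ∑ i : Fin r,
      Θ α β i i * τ i α * (starRingEnd ℂ) (τ i β) with hC
  -- the averaged Griffiths quantity
  have key := key_identity Θ τ
  -- each term in the ε-average is a Griffiths value, hence nonnegative
  have hGnn : ∀ ε : Fin r → ZMod 4,
      0 ≤ ((∑ α, ∑ β, ∑ i, ∑ k, Θ α β i k * (∑ j, τ j α * ww (-ε j))
        * (starRingEnd ℂ) (∑ l, τ l β * ww (-ε l)) * ww (ε i)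
        * (starRingEnd ℂ) (ww (ε k)))).re := fun ε =>
    hgriff_nonneg (fun α => ∑ j, τ j α * ww (-ε j)) (fun i => ww (ε i))
  -- there is ε₀ with nonzero v-vector
  have hvex : ∃ ε₀ : Fin r → ZMod 4, (fun α => ∑ j, τ j α * ww (-ε₀ j)) ≠ 0 := by
    by_contra h
    push_neg at h
    have h1 := congrFun (h (fun _ => 0)) α₀
    have h2 := congrFun (h (fun m => if m = i₀ then 2 else 0)) α₀
    simp only [Pi.zero_apply] at h1 h2
    have hdiff : (∑ j, τ j α₀ * ww (-(0:ZMod 4))) -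
        (∑ j, τ j α₀ * ww (-(if j = i₀ then (2:ZMod 4) else 0)))
        = τ i₀ α₀ * (ww 0 - ww (-2)) := by
      rw [← Finset.sum_sub_distrib]
      rw [Finset.sum_eq_single i₀]
      · simp [mul_sub]
      · intro b _ hb
        simp [hb]
      · simp
    rw [h1, h2, sub_zero] at hdiff
    have hval : ww 0 - ww (-2) = 2 := by
      have h2' : (-2 : ZMod 4) = 2 := by decide
      rw [ww_zero, h2']
      simp [ww, show (ZMod.val (2 : ZMod 4)) = 2 from rfl, Complex.I_sq]
      norm_num
    rw [hval] at hdiff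
    exact hτ0 (by simpa using hdiff.symm)
  obtain ⟨ε₀, hε₀⟩ := hvex
  -- the ε₀-term is strictly positive
  have hw0 : (fun i => ww (ε₀ i)) ≠ 0 := by
    intro h
    exact ww_ne_zero (ε₀ i₀) (congrFun h i₀)
  have hGpos : 0 < ((∑ α, ∑ β, ∑ i, ∑ k, Θ α β i k * (∑ j, τ j α * ww (-ε₀ j))
        * (starRingEnd ℂ) (∑ l, τ l β * ww (-ε₀ l)) * ww (ε₀ i)
        * (starRingEnd ℂ) (ww (ε₀ k)))).re :=
    hgriff_pos (fun α => ∑ j, τ j α * ww (-ε₀ j)) (fun i => ww (ε₀ i)) hε₀ hw0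
  -- the whole average is strictly positive
  have hSpos : 0 < (∑ ε : Fin r → ZMod 4, (∑ α, ∑ β, ∑ i, ∑ k,
      Θ α β i k * (∑ j, τ j α * ww (-ε j))
        * (starRingEnd ℂ) (∑ l, τ l β * ww (-ε l)) * ww (ε i)
        * (starRingEnd ℂ) (ww (ε k)))).re := by
    rw [Complex.re_sum]
    exact Finset.sum_pos' (fun ε _ => hGnn ε) ⟨ε₀, Finset.mem_univ ε₀, hGpos⟩
  -- the diagonal term C is a sum of Griffiths values, hence nonnegative
  have hCnn : 0 ≤ C.re := by
    have hrw : C = ∑ i : Fin r, ∑ α, ∑ β, ∑ p : Fin r, ∑ q : Fin r,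
        Θ α β p q * τ i α * (starRingEnd ℂ) (τ i β)
          * (if p = i then 1 else 0) * (starRingEnd ℂ) (if q = i then 1 else 0) := by
      rw [hC]
      rw [show (∑ α : Fin n, ∑ β : Fin n, ∑ i : Fin r,
          Θ α β i i * τ i α * (starRingEnd ℂ) (τ i β))
          = ∑ α : Fin n, ∑ i : Fin r, ∑ β : Fin n,
          Θ α β i i * τ i α * (starRingEnd ℂ) (τ i β) from
        Finset.sum_congr rfl fun α _ => Finset.sum_comm]
      rw [Finset.sum_comm]
      refine Finset.sum_congr rfl fun i _ => Finset.sum_congr rfl fun α _ =>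
        Finset.sum_congr rfl fun β _ => ?_
      symm
      simp [apply_ite (starRingEnd ℂ), mul_ite, mul_one, mul_zero,
        Finset.sum_ite_eq', Finset.mem_univ]
    rw [hrw, Complex.re_sum]
    refine Finset.sum_nonneg fun i _ => ?_
    exact hgriff_nonneg (fun α => τ i α) (fun p => if p = i then 1 else 0)
  -- put everything together
  rw [← hA, ← hB, ← hC] at key
  have h4 : (0:ℝ) < 4 ^ r := by positivity
  have hre : (4:ℝ) ^ r * A.re + (4:ℝ) ^ r * B.re - (4:ℝ) ^ r * C.re
      = (((4:ℂ)) ^ r * A + (4:ℂ) ^ r * B - (4:ℂ) ^ r * C).re := by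
    have hcast : ((4:ℂ)) ^ r = (((4:ℝ) ^ r : ℝ) : ℂ) := by push_cast; ring
    rw [hcast]
    simp only [Complex.sub_re, Complex.add_re, Complex.re_ofReal_mul]
  rw [← key] at hre
  have hmain : 0 < (4:ℝ) ^ r * A.re + (4:ℝ) ^ r * B.re := by
    nlinarith [hSpos, hCnn, h4]
  have h5 : 0 < A.re + B.re := by nlinarith [hmain, h4]
  rw [Complex.add_re]
  exact h5
end

section
/- Let 1 < k < n be integers and let R be a curvature-type tensor on ℂⁿ with Kähler symmetries. Fix a unit vector X and an orthonormal basis {E₁ = X, E₂, …, Eₙ} of ℂⁿ. For each k-element subset S ⊆ {2,…,n} of size k−1, let Ric_k^S(X) = R(X,X̄,X,X̄) + Σ_{i∈S} R(X,X̄,Eᵢ,Ēᵢ). If Ric_k^S(X) ≤ −(k+1)σ for every such subset S, then summing over all (n−1 choose k−1) subsets yields (n−1 choose k−1)·R(X,X̄,X,X̄) + (n−2 choose k−2)·(Ric(X,X̄) − R(X,X̄,X,X̄)) ≤ −(k+1)σ·(n−1 choose k−1), which simplifies to (n−k)·R(X,X̄,X,X̄) + (k−1)·Ric(X,X̄) ≤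 −(n−1)(k+1)σ. -/
open Finset


lemma count_mem_powersetCard {α : Type*} [DecidableEq α] (T : Finset α) (m : ℕ) (hm : 0 < m)
    (i : α) (hi : i ∈ T) :
    ((powersetCard m T).filter (fun S => i ∈ S)).card = (T.card - 1).choose (m - 1) := by
  rw [← Finset.card_erase_of_mem hi, ← card_powersetCard]
  refine Finset.card_bij' (fun S _ => S.erase i) (fun S _ => insert i S) ?_ ?_ ?_ ?_
  · intro S hS
    simp only [mem_filter, mem_powersetCard] at hS
    rw [mem_powersetCard]
    exact ⟨erase_subset_erase _ hS.1.1, by rw [card_erase_of_mem hS.2, hS.1.2]⟩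
  · intro S hS
    rw [mem_powersetCard] at hS
    have hiS : i ∉ S := fun h => (mem_erase.1 (hS.1 h)).1 rfl
    simp only [mem_filter, mem_powersetCard]
    refine ⟨⟨?_, ?_⟩, mem_insert_self _ _⟩
    · exact insert_subset hi (hS.1.trans (erase_subset _ _))
    · rw [card_insert_of_notMem hiS, hS.2]; omega
  · intro S hS
    simp only [mem_filter] at hS
    exact insert_erase hS.2
  · intro S hS
    rw [mem_powersetCard] at hS
    exact erase_insert (fun h => (mem_erase.1 (hS.1 h)).1 rfl)

lemma double_count {α : Type*} [DecidableEq α] (T : Finset α) (m : ℕ) (hm : 0 < m)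
    (f : α → ℝ) :
    ∑ S ∈ powersetCard m T, ∑ i ∈ S, f i
      = ((T.card - 1).choose (m - 1) : ℝ) * ∑ i ∈ T, f i := by
  have h1 : ∀ S ∈ powersetCard m T, ∑ i ∈ S, f i = ∑ i ∈ T, if i ∈ S then f i else 0 := by
    intro S hS
    rw [mem_powersetCard] at hS
    rw [sum_ite_mem, inter_eq_right.2 hS.1]
  rw [sum_congr rfl h1, sum_comm, Finset.mul_sum]
  apply sum_congr rfl
  intro i hi
  rw [sum_ite, sum_const_zero, sum_const, add_zero, count_mem_powersetCard T m hm i hi,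
    nsmul_eq_mul]

/-- Combinatorial summation proof of Lemma 2.1 (Chu–Lee–Tam): fix a unit vector
`X = E 0` in an orthonormal basis `E` of `ℂⁿ`. If for every `(k−1)`-element subset
`S ⊆ {1,…,n−1}` one has `R(X,X̄,X,X̄) + Σ_{i∈S} R(X,X̄,Eᵢ,Ēᵢ) ≤ −(k+1)σ`, then
`(n−k) R(X,X̄,X,X̄) + (k−1) Ric(X,X̄) ≤ −(n−1)(k+1)σ`, where
`Ric(X,X̄) = Σᵢ R(X,X̄,Eᵢ,Ēᵢ)` over the full basis. -/
theorem riccik_subset_summation (n k : ℕ) (hk : 1 < k) (hkn : k < n)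
    (σ : ℝ) (hσ : 0 ≤ σ)
    (R : EuclideanSpace ℂ (Fin n) → EuclideanSpace ℂ (Fin n) →
          EuclideanSpace ℂ (Fin n) → EuclideanSpace ℂ (Fin n) → ℂ)
    (hconj : ∀ X Y Z W, (starRingEnd ℂ) (R X Y Z W) = R Y X W Z)
    (hsym1 : ∀ X Y Z W, R X Y Z W = R Z Y X W)
    (hsym2 : ∀ X Y Z W, R X Y Z W = R Z W X Y)
    (E : OrthonormalBasis (Fin n) ℂ (EuclideanSpace ℂ (Fin n)))
    (X : EuclideanSpace ℂ (Fin n)) (hX : ‖X‖ = 1) (hX0 : X = E ⟨0, by omega⟩)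
    (hsub : ∀ S : Finset (Fin n), (⟨0, by omega⟩ : Fin n) ∉ S → S.card = k - 1 →
      (R X X X X + ∑ i ∈ S, R X X (E i) (E i)).re ≤ -((k : ℝ) + 1) * σ) :
    ((n : ℝ) - k) * (R X X X X).re
      + ((k : ℝ) - 1) * (∑ i : Fin n, R X X (E i) (E i)).re
      ≤ -((n : ℝ) - 1) * ((k : ℝ) + 1) * σ := by
  set z : Fin n := ⟨0, by omega⟩ with hz
  set f : Fin n → ℝ := fun i => (R X X (E i) (E i)).re with hf
  set a : ℝ := (R X X X X).re with ha
  set T : Finset (Fin n) := univ.erase z with hT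
  have hTcard : T.card = n - 1 := by
    rw [hT, card_erase_of_mem (mem_univ z), card_univ, Fintype.card_fin]
  set N : ℕ := (n - 1).choose (k - 1) with hN
  set M : ℕ := (n - 2).choose (k - 2) with hM
  set s : ℝ := ∑ i ∈ T, f i with hs
  -- each subset gives the inequality
  have hstep : ∀ S ∈ powersetCard (k - 1) T, a + ∑ i ∈ S, f i ≤ -((k : ℝ) + 1) * σ := by
    intro S hS
    rw [mem_powersetCard] at hS
    have h0 : z ∉ S := fun h => (mem_erase.1 (hS.1 h)).1 rfl
    have := hsub S h0 hS.2
    rwa [Complex.add_re, Complex.re_sum] at this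
  -- sum over all subsets
  have hsum : (N : ℝ) * a + (M : ℝ) * s ≤ -((k : ℝ) + 1) * σ * N := by
    have h1 : ∑ S ∈ powersetCard (k - 1) T, (a + ∑ i ∈ S, f i)
        ≤ ∑ S ∈ powersetCard (k - 1) T, (-((k : ℝ) + 1) * σ) :=
      sum_le_sum hstep
    rw [sum_add_distrib, sum_const, sum_const, card_powersetCard, hTcard,
      double_count T (k - 1) (by omega) f, hTcard] at h1
    have e1 : n - 1 - 1 = n - 2 := by omega
    have e2 : k - 1 - 1 = k - 2 := by omega
    rw [e1, e2] at h1
    rw [nsmul_eq_mul, nsmul_eq_mul] at h1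
    calc (N : ℝ) * a + (M : ℝ) * s ≤ ((n-1).choose (k-1) : ℝ) * (-((k:ℝ)+1) * σ) := h1
    _ = -((k : ℝ) + 1) * σ * N := by rw [hN]; ring
  -- choose identity : (n-1) * M = (k-1) * N
  have hnat : (n - 1) * M = N * (k - 1) := by
    have h := Nat.add_one_mul_choose_eq (n - 2) (k - 2)
    have e1 : n - 2 + 1 = n - 1 := by omega
    have e2 : k - 2 + 1 = k - 1 := by omega
    rw [e1, e2] at h
    exact h
  have hNM : ((n : ℝ) - 1) * M = (N : ℝ) * ((k : ℝ) - 1) := by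
    have := congrArg (fun m : ℕ => (m : ℝ)) hnat
    push_cast at this
    have hn1 : ((n : ℕ) - 1 : ℕ) = (n : ℕ) - 1 := rfl
    rw [Nat.cast_sub (by omega : 1 ≤ n)] at this
    rw [Nat.cast_sub (by omega : 1 ≤ k)] at this
    push_cast at this
    linarith [this]
  have hNpos : (0 : ℝ) < N := by
    have : 0 < N := Nat.choose_pos (by omega)
    exact_mod_cast this
  have hn1 : (0 : ℝ) ≤ (n : ℝ) - 1 := by
    have : (1 : ℝ) ≤ n := by exact_mod_cast (by omega : 1 ≤ n)
    linarith
  -- multiply by (n-1) and divide by N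
  have key : (N : ℝ) * (((n : ℝ) - 1) * a + ((k : ℝ) - 1) * s)
      ≤ (N : ℝ) * (-((n : ℝ) - 1) * ((k : ℝ) + 1) * σ) := by
    have h2 := mul_le_mul_of_nonneg_left hsum hn1
    calc (N : ℝ) * (((n : ℝ) - 1) * a + ((k : ℝ) - 1) * s)
        = ((n : ℝ) - 1) * ((N : ℝ) * a + (M : ℝ) * s) := by linear_combination (-s) * hNM
      _ ≤ ((n : ℝ) - 1) * (-((k : ℝ) + 1) * σ * N) := h2
      _ = (N : ℝ) * (-((n : ℝ) - 1) * ((k : ℝ) + 1) * σ) := by ring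
  have key2 := le_of_mul_le_mul_left key hNpos
  -- rewrite the Ricci sum
  have hRic : (∑ i : Fin n, R X X (E i) (E i)).re = a + s := by
    rw [Complex.re_sum]
    have hsplit : ∑ i : Fin n, f i = ∑ i ∈ T, f i + f z := sum_erase_add univ f (mem_univ z) |>.symm
    have hfz : f z = a := by rw [hf, ha, hX0]
    rw [show (∑ i : Fin n, (R X X (E i) (E i)).re) = ∑ i : Fin n, f i from rfl, hsplit, hfz]
    ring
  rw [hRic]
  nlinarith [key2]
end
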